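/- For every positive integer k and real x with |x| < 1, x ≠ 0, ∫₀^π θ sin θ · ((1 + x cos θ)^{1/k} + (1 − x cos θ)^{1/k}) dθ = (πk/((k+1)x)) · ((1+x)^{(k+1)/k} − (1−x)^{(k+1)/k}). -/

import Mathlib

open Real intervalIntegral

theorem stmt_14 (k : ℕ) (hk : 0 < k) (x : ℝ) (hx : |x| < 1) (hx0 : x ≠ 0) :
    ∫ θ in (0:ℝ)..Real.pi,
        θ * Real.sin θ *
          ((1 + x * Real.cos θ) ^ ((1 : ℝ) / k) + (1 - x * Real.cos θ) ^ ((1 : ℝ) / k))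
      = Real.pi * k / ((k + 1) * x) *
        ((1 + x) ^ (((k : ℝ) + 1) / k) - (1 - x) ^ (((k : ℝ) + 1) / k)) := by
  have hk' : (k : ℝ) ≠ 0 := Nat.cast_ne_zero.2 hk.ne'
  have hkpos : (0:ℝ) < k := Nat.cast_pos.2 hk
  set p : ℝ := ((k : ℝ) + 1) / k with hp
  have hppos : 0 < p := by positivity
  have hp0 : p ≠ 0 := hppos.ne'
  have hp1 : p - 1 = (1:ℝ) / k := by rw [hp]; field_simp; ring
  set g : ℝ → ℝ := fun θ =>
      (1 + x * Real.cos θ) ^ ((1 : ℝ) / k) + (1 - x * Real.cos θ) ^ ((1 : ℝ) / k) with hg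
  have hpos : ∀ θ : ℝ, 0 < 1 + x * Real.cos θ ∧ 0 < 1 - x * Real.cos θ := by
    intro θ
    have h1 : |x * Real.cos θ| < 1 := by
      rw [abs_mul]
      exact lt_of_le_of_lt
        (mul_le_of_le_one_right (abs_nonneg x) (Real.abs_cos_le_one θ)) hx
    rw [abs_lt] at h1
    constructor <;> linarith [h1.1, h1.2]
  have hgcont : Continuous g := by
    apply Continuous.add
    · exact (continuous_const.add (continuous_const.mul Real.continuous_cos)).rpow_const
        (fun θ => Or.inr (by positivity))
    · exact (continuous_const.sub (continuous_const.mul Real.continuous_cos)).rpow_const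
        (fun θ => Or.inr (by positivity))
  have hgsym : ∀ θ : ℝ, g (Real.pi - θ) = g θ := by
    intro θ
    simp only [hg, Real.cos_pi_sub, mul_neg, ← sub_eq_add_neg, sub_neg_eq_add]
    exact add_comm _ _
  -- FTC part
  have hderiv : ∀ θ : ℝ, HasDerivAt
      (fun θ => ((1 - x * Real.cos θ) ^ p - (1 + x * Real.cos θ) ^ p) / (p * x))
      (Real.sin θ * g θ) θ := by
    intro θ
    have h1 : HasDerivAt (fun θ : ℝ => 1 - x * Real.cos θ) (x * Real.sin θ) θ := by
      simpa using ((Real.hasDerivAt_cos θ).const_mul x).const_sub 1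
    have h2 : HasDerivAt (fun θ : ℝ => 1 + x * Real.cos θ) (-(x * Real.sin θ)) θ := by
      simpa using ((Real.hasDerivAt_cos θ).const_mul x).const_add 1
    have h1' := h1.rpow_const (p := p) (Or.inl (hpos θ).2.ne')
    have h2' := h2.rpow_const (p := p) (Or.inl (hpos θ).1.ne')
    have h := (h1'.sub h2').div_const (p * x)
    refine h.congr_deriv ?_
    rw [hp1]
    simp only [hg]
    field_simp
    ring
  have hJ : ∫ θ in (0:ℝ)..Real.pi, Real.sin θ * g θ
      = 2 * ((1 + x) ^ p - (1 - x) ^ p) / (p * x) := by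
    rw [intervalIntegral.integral_eq_sub_of_hasDerivAt (fun θ _ => hderiv θ)
      ((Real.continuous_sin.mul hgcont).intervalIntegrable 0 Real.pi)]
    rw [Real.cos_pi, Real.cos_zero]
    ring
  -- symmetry part
  have hint1 : IntervalIntegrable (fun θ => θ * Real.sin θ * g θ) MeasureTheory.volume 0 Real.pi :=
    ((continuous_id.mul Real.continuous_sin).mul hgcont).intervalIntegrable 0 Real.pi
  have hint2 : IntervalIntegrable (fun θ => Real.pi * (Real.sin θ * g θ)) MeasureTheory.volume 0 Real.pi :=
    (continuous_const.mul (Real.continuous_sin.mul hgcont)).intervalIntegrable 0 Real.pi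
  have hsym : ∫ θ in (0:ℝ)..Real.pi, θ * Real.sin θ * g θ
      = ∫ θ in (0:ℝ)..Real.pi, (Real.pi - θ) * Real.sin θ * g θ := by
    have h := intervalIntegral.integral_comp_sub_left (a := (0:ℝ)) (b := Real.pi)
      (fun θ => θ * Real.sin θ * g θ) Real.pi
    simp only [sub_zero, sub_self] at h
    rw [← h]
    apply intervalIntegral.integral_congr
    intro θ _
    simp only [Real.sin_pi_sub, hgsym]
  have hsplit : ∫ θ in (0:ℝ)..Real.pi, (Real.pi - θ) * Real.sin θ * g θ
      = Real.pi * (∫ θ in (0:ℝ)..Real.pi, Real.sin θ * g θ)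
        - ∫ θ in (0:ℝ)..Real.pi, θ * Real.sin θ * g θ := by
    rw [← intervalIntegral.integral_const_mul, ← intervalIntegral.integral_sub hint2 hint1]
    apply intervalIntegral.integral_congr
    intro θ _
    ring
  have hI : ∫ θ in (0:ℝ)..Real.pi, θ * Real.sin θ * g θ
      = Real.pi / 2 * (∫ θ in (0:ℝ)..Real.pi, Real.sin θ * g θ) := by
    have := hsym.trans hsplit
    linarith
  calc ∫ θ in (0:ℝ)..Real.pi,
        θ * Real.sin θ *
          ((1 + x * Real.cos θ) ^ ((1 : ℝ) / k) + (1 - x * Real.cos θ) ^ ((1 : ℝ) / k))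
      = ∫ θ in (0:ℝ)..Real.pi, θ * Real.sin θ * g θ := rfl
    _ = Real.pi / 2 * (2 * ((1 + x) ^ p - (1 - x) ^ p) / (p * x)) := by rw [hI, hJ]
    _ = Real.pi * k / ((k + 1) * x) * ((1 + x) ^ p - (1 - x) ^ p) := by
        rw [hp]; field_simp
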